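/- Let a < b be real numbers and let u : [a, b] → ℝ be twice continuously differentiable on [a, b]. Then for every x ∈ (a, b), |u′(x)| ≤ ∫_a^b |u″(t)| dt + (18/(b−a)²) ∫_a^b |u(t)| dt. -/

import Mathlib

open MeasureTheory Set

/-- If `u` is twice continuously differentiable on `[a, b]` (with first
derivative `u'` and second derivative `u''` on `[a, b]`, `u''` continuous), then for every
`x ∈ (a, b)` one has `|u'(x)| ≤ ∫_a^b |u''| + (18/(b-a)²) ∫_a^b |u|`. -/
lemma min_le_avg_aux {u : ℝ → ℝ} {c d : ℝ} (hcd : c < d)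
    (hcont : ContinuousOn u (Icc c d)) :
    ∃ α ∈ Icc c d, |u α| * (d - c) ≤ ∫ t in Icc c d, |u t| := by
  have habs : ContinuousOn (fun t => |u t|) (Icc c d) := hcont.abs
  obtain ⟨α, hα, hmin⟩ := isCompact_Icc.exists_isMinOn (nonempty_Icc.2 hcd.le) habs
  refine ⟨α, hα, ?_⟩
  have h1 : ∫ _ in Icc c d, |u α| ≤ ∫ t in Icc c d, |u t| := by
    apply setIntegral_mono_on
    · exact integrableOn_const (by simp [Real.volume_Icc])
    · exact habs.integrableOn_Icc
    · exact measurableSet_Icc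
    · exact fun t ht => hmin ht
  have h2 : ∫ _ in Icc c d, |u α| = (d - c) * |u α| := by
    rw [setIntegral_const, measureReal_def, Real.volume_Icc, smul_eq_mul,
      ENNReal.toReal_ofReal (by linarith)]
  linarith [h2 ▸ h1]

theorem deriv_pointwise_bound (a b : ℝ) (hab : a < b) (u u' u'' : ℝ → ℝ)
    (hu' : ∀ x ∈ Set.Icc a b, HasDerivWithinAt u (u' x) (Set.Icc a b) x)
    (hu'' : ∀ x ∈ Set.Icc a b, HasDerivWithinAt u' (u'' x) (Set.Icc a b) x)
    (hcont : ContinuousOn u'' (Set.Icc a b)) :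
    ∀ x ∈ Set.Ioo a b,
      |u' x| ≤ (∫ t in Set.Ioo a b, |u'' t|) +
        18 / (b - a) ^ 2 * ∫ t in Set.Ioo a b, |u t| := by
  intro x hx
  have hucont : ContinuousOn u (Icc a b) := fun y hy => (hu' y hy).continuousWithinAt
  have hu'cont : ContinuousOn u' (Icc a b) := fun y hy => (hu'' y hy).continuousWithinAt
  set L := b - a with hLdef
  clear_value L
  have hL0 : (0:ℝ) < L := by simp only [hLdef]; linarith
  set a1 := a + L / 3 with ha1def
  clear_value a1
  set b1 := b - L / 3 with hb1def
  clear_value b1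
  have ha1 : a < a1 := by simp only [ha1def]; linarith
  have hb1 : b1 < b := by simp only [hb1def]; linarith
  have ha1b1 : a1 < b1 := by simp only [ha1def, hb1def, hLdef]; linarith
  have hIuInt : IntegrableOn (fun t => |u t|) (Icc a b) := hucont.abs.integrableOn_Icc
  set Iu := ∫ t in Set.Ioo a b, |u t| with hIu
  clear_value Iu
  have hIcc_sub : ∀ {c d : ℝ}, a ≤ c → d ≤ b →
      (∫ t in Icc c d, |u t|) ≤ Iu := by
    intro c d hc hd
    rw [hIu, ← integral_Icc_eq_integral_Ioo]
    apply setIntegral_mono_set hIuInt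
    · exact Filter.Eventually.of_forall fun t => abs_nonneg _
    · exact HasSubset.Subset.eventuallyLE (Icc_subset_Icc hc hd)
  -- α in left third
  obtain ⟨α, hαmem, hα⟩ := min_le_avg_aux ha1 (hucont.mono (Icc_subset_Icc le_rfl (by simp only [ha1def, hLdef]; linarith)))
  obtain ⟨β, hβmem, hβ⟩ := min_le_avg_aux hb1 (hucont.mono (Icc_subset_Icc (by simp only [hb1def, hLdef]; linarith) le_rfl))
  have hαa : a ≤ α := hαmem.1
  have hαa1 : α ≤ a1 := hαmem.2
  have hβb1 : b1 ≤ β := hβmem.1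
  have hβb : β ≤ b := hβmem.2
  have hαβ : α < β := lt_of_le_of_lt hαa1 (lt_of_lt_of_le ha1b1 hβb1)
  have ha1a : a1 - a = L / 3 := by simp only [ha1def]; ring
  have hb1b : b - b1 = L / 3 := by simp only [hb1def, hLdef]; ring
  have hαbound : |u α| * (L / 3) ≤ Iu := by
    calc |u α| * (L / 3) = |u α| * (a1 - a) := by rw [ha1a]
    _ ≤ ∫ t in Icc a a1, |u t| := hα
    _ ≤ Iu := hIcc_sub le_rfl (by simp only [ha1def, hLdef]; linarith)
  have hβbound : |u β| * (L / 3) ≤ Iu := by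
    calc |u β| * (L / 3) = |u β| * (b - b1) := by rw [hb1b]
    _ ≤ ∫ t in Icc b1 b, |u t| := hβ
    _ ≤ Iu := hIcc_sub (by simp only [hb1def, hLdef]; linarith) le_rfl
  -- MVT on [α, β]
  have hderivAt : ∀ y ∈ Ioo a b, HasDerivAt u' (u'' y) y := fun y hy =>
    (hu'' y (Ioo_subset_Icc_self hy)).hasDerivAt (Icc_mem_nhds hy.1 hy.2)
  have hderivAtu : ∀ y ∈ Ioo a b, HasDerivAt u (u' y) y := fun y hy =>
    (hu' y (Ioo_subset_Icc_self hy)).hasDerivAt (Icc_mem_nhds hy.1 hy.2)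
  obtain ⟨ξ, hξmem, hξ⟩ := exists_hasDerivAt_eq_slope u u' hαβ
    (hucont.mono (Icc_subset_Icc hαa hβb))
    (fun y hy => hderivAtu y ⟨lt_of_le_of_lt hαa hy.1, lt_of_lt_of_le hy.2 hβb⟩)
  have hξab : ξ ∈ Ioo a b := ⟨lt_of_le_of_lt hαa hξmem.1, lt_of_lt_of_le hξmem.2 hβb⟩
  -- bound |u' ξ|
  have hβα : L / 3 ≤ β - α := by
    have : b1 - a1 = L / 3 := by simp only [ha1def, hb1def, hLdef]; ring
    linarith
  have hIu0 : 0 ≤ Iu := by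
    rw [hIu]; exact setIntegral_nonneg measurableSet_Ioo fun t _ => abs_nonneg _
  have hξbound : |u' ξ| ≤ 18 / L ^ 2 * Iu := by
    rw [hξ]
    have h1 : |(u β - u α) / (β - α)| = |u β - u α| / (β - α) := by
      rw [abs_div, abs_of_pos (by linarith : (0:ℝ) < β - α)]
    rw [h1, div_le_iff₀ (by linarith : (0:ℝ) < β - α)]
    have h2 : |u β - u α| ≤ |u β| + |u α| := abs_sub _ _
    have h3 : |u α| ≤ 3 / L * Iu := by
      rw [div_mul_eq_mul_div, le_div_iff₀ hL0]; nlinarith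
    have h4 : |u β| ≤ 3 / L * Iu := by
      rw [div_mul_eq_mul_div, le_div_iff₀ hL0]; nlinarith
    calc |u β - u α| ≤ |u β| + |u α| := h2
    _ ≤ 3 / L * Iu + 3 / L * Iu := add_le_add h4 h3
    _ = 18 / L ^ 2 * Iu * (L / 3) := by field_simp; ring
    _ ≤ 18 / L ^ 2 * Iu * (β - α) := by
        apply mul_le_mul_of_nonneg_left hβα; positivity
  -- FTC: u' x - u' ξ = ∫ ξ..x u''
  set I2 := ∫ t in Set.Ioo a b, |u'' t| with hI2
  clear_value I2
  have hI2Int : IntegrableOn (fun t => |u'' t|) (Icc a b) := hcont.abs.integrableOn_Icc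
  have hftc : |u' x - u' ξ| ≤ I2 := by
    have key : ∀ c d : ℝ, c ∈ Ioo a b → d ∈ Ioo a b → c ≤ d →
        |u' d - u' c| ≤ I2 := by
      intro c d hc hd hcd
      have hsub : Icc c d ⊆ Ioo a b := fun t ht => ⟨lt_of_lt_of_le hc.1 ht.1, lt_of_le_of_lt ht.2 hd.2⟩
      have hint : IntervalIntegrable u'' volume c d := by
        apply ContinuousOn.intervalIntegrable
        rw [uIcc_of_le hcd]
        exact hcont.mono (hsub.trans Ioo_subset_Icc_self)
      have heq : ∫ t in c..d, u'' t = u' d - u' c := by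
        apply intervalIntegral.integral_eq_sub_of_hasDerivAt
        · intro t ht
          rw [uIcc_of_le hcd] at ht
          exact hderivAt t (hsub ht)
        · exact hint
      rw [← heq]
      calc |∫ t in c..d, u'' t| ≤ ∫ t in c..d, |u'' t| := by
            apply intervalIntegral.abs_integral_le_integral_abs hcd
      _ = ∫ t in Ioc c d, |u'' t| := intervalIntegral.integral_of_le hcd
      _ ≤ I2 := by
          rw [hI2, ← integral_Icc_eq_integral_Ioo]
          apply setIntegral_mono_set hI2Int
          · exact Filter.Eventually.of_forall fun t => abs_nonneg _
          · exact HasSubset.Subset.eventuallyLE ((Ioc_subset_Icc_self.trans (Icc_subset_Icc hc.1.le hd.2.le)))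
    rcases le_total ξ x with h | h
    · exact key ξ x hξab hx h
    · rw [abs_sub_comm]; exact key x ξ hx hξab h
  calc |u' x| ≤ |u' ξ| + |u' x - u' ξ| := by
        have := abs_add_le (u' ξ) (u' x - u' ξ); simpa using this
  _ ≤ 18 / L ^ 2 * Iu + I2 := add_le_add hξbound hftc
  _ = I2 + 18 / L ^ 2 * Iu := by ring
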